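/- For every h ≥ 1, the map G : t ↦ (t^fix, t^free, ((v_j(t), t_j^spn(t)) : 1 ≤ j ≤ ℓ(t))) is a bijection from B_h, the set of full binary trees with refined Horton–Strahler number h, to the set B'_h = B_{⌈h/2⌉−1} × (⋃_{k=⌊h/2⌋}^{h−1} B_k) × ⋃_{ℓ≥0} ( ({1} × ⋃_{k=0}^{⌈h/2⌉−1} B_k) ∪ ({2} × ⋃_{k=0}^{⌊h/2⌋−1} B_k) )^ℓ. -/

import Mathlib

/-- Words over the alphabet {1,2}, encoded as lists of booleans (`false` = 1, `true` = 2). -/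
abbrev Word := List Bool

/-- Longest common prefix of two words (`u ∧ v`). -/
def lcp : Word → Word → Word
  | a :: as, b :: bs => if a = b then a :: lcp as bs else []
  | _, _ => []

/-- The lexicographic (strict) order on words; a strict prefix is smaller. -/
def wlex (u v : Word) : Prop := List.Lex (· < ·) u v

/-- A binary tree: a finite, prefix-closed set of words containing the empty word. -/
def IsBinaryTree (t : Set Word) : Prop :=
  t.Finite ∧ ([] : Word) ∈ t ∧ ∀ u ∈ t, ∀ v : Word, v <+: u → v ∈ t

/-- Fullness: each vertex has either zero or two children. -/
def IsFull (t : Set Word) : Prop :=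
  ∀ u ∈ t, (u ++ [false] ∈ t ↔ u ++ [true] ∈ t)

def IsFullBinaryTree (t : Set Word) : Prop := IsBinaryTree t ∧ IsFull t

/-- `φ` is an embedding of `t` into `t'`: injective on `t`, strictly increasing for the
lexicographic order, and preserving longest common prefixes. -/
def IsEmbedding (t t' : Set Word) (φ : Word → Word) : Prop :=
  (∀ u ∈ t, φ u ∈ t') ∧
  (∀ u ∈ t, ∀ v ∈ t, u ≠ v → φ u ≠ φ v) ∧
  (∀ u ∈ t, ∀ v ∈ t, wlex u v → wlex (φ u) (φ v)) ∧
  (∀ u ∈ t, ∀ v ∈ t, φ (lcp u v) = lcp (φ u) (φ v))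

/-- `t` can be embedded in `t'`. -/
def Embeds (t t' : Set Word) : Prop := ∃ φ, IsEmbedding t t' φ

/-- `graft b t = b · t`, the copy of `t` rooted at the child `b` of the root. -/
def graft (b : Bool) (t : Set Word) : Set Word := (fun w => b :: w) '' t

/-- The interpolating trees: τ₀ = {∅}, τ₁ = {∅,1,2},
τ_{2m} = {∅} ∪ 1·τ_m ∪ 2·τ_{m-1}, τ_{2m+1} = {∅} ∪ 1·τ_m ∪ 2·τ_m (for m ≥ 1). -/
def tau : ℕ → Set Word
  | 0 => {[]}
  | 1 => {[], [false], [true]}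
  | n + 2 => {[]} ∪ graft false (tau ((n + 2) / 2)) ∪ graft true (tau ((n + 1) / 2))
termination_by n => n
decreasing_by all_goals omega

/-- The subtree of `t` rooted at `u`: θ_u t = {v : uv ∈ t}. -/
def subtreeAt (u : Word) (t : Set Word) : Set Word := {v | u ++ v ∈ t}

/-- The refined Horton–Strahler number S(t) = max {r : τ_r embeds in t}. -/
noncomputable def RHS (t : Set Word) : ℕ := sSup {r | Embeds (tau r) t}

/-- S_u(t) = S(θ_u t). -/
noncomputable def Sv (u : Word) (t : Set Word) : ℕ := RHS (subtreeAt u t)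

/-- The set of internal vertices of `t` (those having a child in `t`). -/
def internals (t : Set Word) : Set Word :=
  {u | u ∈ t ∧ (u ++ [false] ∈ t ∨ u ++ [true] ∈ t)}

/-- `t` is a full binary tree with refined Horton–Strahler number `k` (i.e. `t ∈ B_k`). -/
def MemB (k : ℕ) (t : Set Word) : Prop := IsFullBinaryTree t ∧ RHS t = k

/-- The decomposition relation `G(t) = (t^fix, t^free, ((v_j, t_j^spn) : 1 ≤ j ≤ ℓ))`: `u` is the
lexicographically maximal vertex with `S_u(t) = h`, `t^free`/`t^fix` are the subtrees at the
children of `u` (sides according to the parity of `h`; `false` = 1, `true` = 2), and the `j`-th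
spinal datum is `(v_j, θ_{u_1…u_{j−1} v_j} t)` with `v_j = 3 − u_j` encoded as `! u_j`. -/
def TreeDecomp (h : ℕ) (t tfix tfree : Set Word) (spn : List (Bool × Set Word)) : Prop :=
  ∃ u : Word, u ∈ t ∧ Sv u t = h ∧ (∀ w ∈ t, Sv w t = h → w = u ∨ wlex w u) ∧
    tfree = subtreeAt (u ++ [decide (h % 2 = 1)]) t ∧
    tfix = subtreeAt (u ++ [decide (h % 2 = 0)]) t ∧
    spn = (List.finRange u.length).map
      (fun j => (! u.get j, subtreeAt (u.take (j : ℕ) ++ [! u.get j]) t))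

/-- Membership in `B'_h = B_{⌈h/2⌉−1} × (⋃_{k=⌊h/2⌋}^{h−1} B_k) ×
⋃_{ℓ≥0} (({1} × ⋃_{k=0}^{⌈h/2⌉−1} B_k) ∪ ({2} × ⋃_{k=0}^{⌊h/2⌋−1} B_k))^ℓ`
(`false` = label 1, `true` = label 2). -/
def MemB' (h : ℕ) (tfix tfree : Set Word) (spn : List (Bool × Set Word)) : Prop :=
  MemB ((h + 1) / 2 - 1) tfix ∧
  (∃ k, h / 2 ≤ k ∧ k ≤ h - 1 ∧ MemB k tfree) ∧
  ∀ p ∈ spn, ∃ k, MemB k p.2 ∧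
    (if p.1 then k + 1 ≤ h / 2 else k + 1 ≤ (h + 1) / 2)

/-! ### Basic lemmas on lcp and lex -/

lemma lcp_nil_left (v : Word) : lcp [] v = [] := by cases v <;> rfl

lemma lcp_nil_right (u : Word) : lcp u [] = [] := by cases u <;> rfl

lemma lcp_cons (a b : Bool) (as bs : Word) :
    lcp (a :: as) (b :: bs) = if a = b then a :: lcp as bs else [] := rfl

lemma lcp_self (u : Word) : lcp u u = u := by
  induction u with
  | nil => rfl
  | cons a as ih => simp [lcp_cons, ih]

lemma lcp_prefix_left (u v : Word) : lcp u v <+: u := by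
  induction u generalizing v with
  | nil => simp [lcp_nil_left]
  | cons a as ih =>
    cases v with
    | nil => simp [lcp_nil_right]
    | cons b bs =>
      rw [lcp_cons]
      split
      · exact List.cons_prefix_cons.mpr ⟨rfl, ih bs⟩
      · simp

lemma lcp_comm (u v : Word) : lcp u v = lcp v u := by
  induction u generalizing v with
  | nil => simp [lcp_nil_left, lcp_nil_right]
  | cons a as ih =>
    cases v with
    | nil => simp [lcp_nil_left, lcp_nil_right]
    | cons b bs =>
      rw [lcp_cons, lcp_cons]
      rcases eq_or_ne a b with rfl | hab
      · simp [ih]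
      · simp [hab, Ne.symm hab]

lemma lcp_prefix_right (u v : Word) : lcp u v <+: v := by
  rw [lcp_comm]; exact lcp_prefix_left v u

lemma lcp_append (w u v : Word) : lcp (w ++ u) (w ++ v) = w ++ lcp u v := by
  induction w with
  | nil => rfl
  | cons a as ih => simp [lcp_cons, ih]

/-- Case analysis for `lcp`. -/
lemma lcp_cases (u v : Word) :
    lcp u v = u ∨ lcp u v = v ∨
      ∃ a b x y, a ≠ b ∧ u = lcp u v ++ a :: x ∧ v = lcp u v ++ b :: y := by
  induction u generalizing v with
  | nil => left; rw [lcp_nil_left]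
  | cons a as ih =>
    cases v with
    | nil => right; left; rw [lcp_nil_right]
    | cons b bs =>
      rcases eq_or_ne a b with rfl | hab
      · rcases ih bs with h | h | ⟨c, d, x, y, hcd, hx, hy⟩
        · left; simp [lcp_cons, h]
        · right; left; simp [lcp_cons, h]
        · right; right
          exact ⟨c, d, x, y, hcd, by simp [lcp_cons]; exact hx,
            by simp [lcp_cons]; exact hy⟩
      · right; right
        exact ⟨a, b, as, bs, hab, by simp [lcp_cons, hab], by simp [lcp_cons, hab]⟩

lemma wlex_iff_lt (u v : Word) : wlex u v ↔ u < v := Iff.rfl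

lemma wlex_asymm {u v : Word} (h : wlex u v) : ¬ wlex v u :=
  fun h' => absurd ((wlex_iff_lt u v).mp h) (lt_asymm ((wlex_iff_lt v u).mp h'))

lemma wlex_of_prefix {u v : Word} (h : u <+: v) (hne : u ≠ v) : wlex u v := by
  obtain ⟨w, rfl⟩ := h
  induction u with
  | nil =>
    cases w with
    | nil => simp at hne
    | cons a l => exact List.Lex.nil
  | cons a l ih => exact List.Lex.cons (ih (by simpa using hne))

lemma wlex_cons {c : Bool} {u v : Word} (h : wlex u v) : wlex (c :: u) (c :: v) :=
  List.Lex.cons h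

lemma wlex_cons_iff {c : Bool} {u v : Word} : wlex (c :: u) (c :: v) ↔ wlex u v := by
  constructor
  · intro h
    cases h with
    | cons h => exact h
    | rel h => exact absurd h (lt_irrefl c)
  · exact wlex_cons

lemma wlex_false_true (u v : Word) : wlex (false :: u) (true :: v) :=
  List.Lex.rel (by decide)

lemma not_wlex_nil (u : Word) : ¬ wlex u [] := by
  intro h; cases h

/-- If the lcp of two nonempty lex-comparable words is empty, heads are `false`, `true`. -/
lemma heads_of_lcp_nil {p q : Word} (hl : lcp p q = []) (hlex : wlex p q)
    (hp : p ≠ []) (hq : q ≠ []) :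
    ∃ p' q', p = false :: p' ∧ q = true :: q' := by
  cases p with
  | nil => exact absurd rfl hp
  | cons a p' =>
    cases q with
    | nil => exact absurd rfl hq
    | cons b q' =>
      rw [lcp_cons] at hl
      have hab : a ≠ b := by intro h; simp [h] at hl
      cases hlex with
      | cons h => exact absurd rfl hab
      | rel h =>
        have : a = false ∧ b = true := by revert h; cases a <;> cases b <;> decide
        exact ⟨p', q', by rw [this.1], by rw [this.2]⟩

lemma wlex_append {u v : Word} (w : Word) (h : wlex u v) : wlex (w ++ u) (w ++ v) := by
  induction w with
  | nil => exact h
  | cons a as ih => exact List.Lex.cons ih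

/-! ### Embeddings -/

lemma isEmbedding_id (t : Set Word) : IsEmbedding t t id :=
  ⟨fun _ hu => hu, fun _ _ _ _ h => h, fun _ _ _ _ h => h, fun _ _ _ _ => rfl⟩

lemma embeds_refl (t : Set Word) : Embeds t t := ⟨id, isEmbedding_id t⟩

lemma IsEmbedding.comp {t t' t'' : Set Word} {φ ψ : Word → Word}
    (hφ : IsEmbedding t t' φ) (hψ : IsEmbedding t' t'' ψ) :
    IsEmbedding t t'' (ψ ∘ φ) := by
  obtain ⟨m1, i1, l1, c1⟩ := hφ
  obtain ⟨m2, i2, l2, c2⟩ := hψ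
  refine ⟨fun u hu => m2 _ (m1 u hu), fun u hu v hv hne => i2 _ (m1 u hu) _ (m1 v hv) (i1 u hu v hv hne),
    fun u hu v hv hl => l2 _ (m1 u hu) _ (m1 v hv) (l1 u hu v hv hl), fun u hu v hv => ?_⟩
  simp only [Function.comp]
  rw [c1 u hu v hv, c2 _ (m1 u hu) _ (m1 v hv)]

lemma Embeds.trans {t t' t'' : Set Word} (h : Embeds t t') (h' : Embeds t' t'') :
    Embeds t t'' := by
  obtain ⟨φ, hφ⟩ := h; obtain ⟨ψ, hψ⟩ := h'
  exact ⟨ψ ∘ φ, hφ.comp hψ⟩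

lemma isEmbedding_append (w : Word) (t : Set Word) :
    IsEmbedding (subtreeAt w t) t (fun v => w ++ v) := by
  refine ⟨fun u hu => hu, fun u _ v _ hne h => hne (by simpa using h), fun u _ v _ h => ?_,
    fun u _ v _ => (lcp_append w u v).symm⟩
  · exact wlex_append w h

lemma embeds_of_embeds_subtree {s t : Set Word} {w : Word}
    (h : Embeds s (subtreeAt w t)) : Embeds s t :=
  h.trans ⟨_, isEmbedding_append w t⟩

/-! ### nodeSet -/

def nodeSet (t1 t2 : Set Word) : Set Word := {[]} ∪ graft false t1 ∪ graft true t2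

lemma nil_mem_nodeSet (t1 t2 : Set Word) : [] ∈ nodeSet t1 t2 := by
  simp [nodeSet]

lemma cons_mem_nodeSet (c : Bool) (x : Word) (t1 t2 : Set Word) :
    c :: x ∈ nodeSet t1 t2 ↔ x ∈ (if c then t2 else t1) := by
  cases c <;> simp [nodeSet, graft]

lemma mem_nodeSet_elim {w : Word} {t1 t2 : Set Word} (h : w ∈ nodeSet t1 t2) :
    w = [] ∨ (∃ x ∈ t1, w = false :: x) ∨ (∃ y ∈ t2, w = true :: y) := by
  cases w with
  | nil => left; rfl
  | cons c x =>
    rw [cons_mem_nodeSet] at h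
    cases c with
    | false => right; left; exact ⟨x, by simpa using h, rfl⟩
    | true => right; right; exact ⟨x, by simpa using h, rfl⟩

lemma nodeSet_decomp {t : Set Word} (h : ([] : Word) ∈ t) :
    t = nodeSet (subtreeAt [false] t) (subtreeAt [true] t) := by
  ext w
  cases w with
  | nil => simpa [nodeSet]
  | cons c x => cases c <;> simp [cons_mem_nodeSet, subtreeAt]

lemma subtreeAt_nil (t : Set Word) : subtreeAt [] t = t := rfl

lemma subtreeAt_append (p q : Word) (t : Set Word) :
    subtreeAt (p ++ q) t = subtreeAt q (subtreeAt p t) := by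
  ext w; simp [subtreeAt]

lemma subtreeAt_cons_nodeSet (c : Bool) (w : Word) (t1 t2 : Set Word) :
    subtreeAt (c :: w) (nodeSet t1 t2) = subtreeAt w (if c then t2 else t1) := by
  ext x
  simp only [subtreeAt, Set.mem_setOf_eq, List.cons_append, cons_mem_nodeSet]

lemma subtreeAt_singleton_nodeSet (c : Bool) (t1 t2 : Set Word) :
    subtreeAt [c] (nodeSet t1 t2) = (if c then t2 else t1) := by
  rw [subtreeAt_cons_nodeSet, subtreeAt_nil]

/-- The combination of two embeddings into an embedding of grafted trees. -/
def combineMap (φ1 φ2 : Word → Word) : Word → Word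
  | [] => []
  | false :: x => false :: φ1 x
  | true :: y => true :: φ2 y

lemma isEmbedding_combine {s1 s2 t1 t2 : Set Word} {φ1 φ2 : Word → Word}
    (h1 : IsEmbedding s1 t1 φ1) (h2 : IsEmbedding s2 t2 φ2) :
    IsEmbedding (nodeSet s1 s2) (nodeSet t1 t2) (combineMap φ1 φ2) := by
  obtain ⟨m1, i1, l1, c1⟩ := h1
  obtain ⟨m2, i2, l2, c2⟩ := h2
  refine ⟨?_, ?_, ?_, ?_⟩
  · intro u hu
    rcases mem_nodeSet_elim hu with rfl | ⟨x, hx, rfl⟩ | ⟨y, hy, rfl⟩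
    · exact nil_mem_nodeSet _ _
    · simpa [combineMap, cons_mem_nodeSet] using m1 x hx
    · simpa [combineMap, cons_mem_nodeSet] using m2 y hy
  · intro u hu v hv hne hEq
    rcases mem_nodeSet_elim hu with rfl | ⟨x, hx, rfl⟩ | ⟨y, hy, rfl⟩ <;>
      rcases mem_nodeSet_elim hv with rfl | ⟨x', hx', rfl⟩ | ⟨y', hy', rfl⟩ <;>
      simp only [combineMap] at hEq
    all_goals first
      | exact hne rfl
      | (injection hEq with hEq1 hEq2
         exact i1 x hx x' hx' (fun hxx => hne (by rw [hxx])) hEq2)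
      | (injection hEq with hEq1 hEq2
         exact i2 y hy y' hy' (fun hyy => hne (by rw [hyy])) hEq2)
      | simp at hEq
  · intro u hu v hv hl
    rcases mem_nodeSet_elim hu with rfl | ⟨x, hx, rfl⟩ | ⟨y, hy, rfl⟩ <;>
      rcases mem_nodeSet_elim hv with rfl | ⟨x', hx', rfl⟩ | ⟨y', hy', rfl⟩ <;>
      simp only [combineMap]
    all_goals first
      | exact absurd hl (not_wlex_nil _)
      | exact List.Lex.nil
      | exact wlex_false_true _ _
      | exact wlex_cons (l1 x hx x' hx' (wlex_cons_iff.mp hl))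
      | exact wlex_cons (l2 y hy y' hy' (wlex_cons_iff.mp hl))
      | (cases hl with | rel hr => exact absurd hr (by decide))
  · intro u hu v hv
    rcases mem_nodeSet_elim hu with rfl | ⟨x, hx, rfl⟩ | ⟨y, hy, rfl⟩ <;>
      rcases mem_nodeSet_elim hv with rfl | ⟨x', hx', rfl⟩ | ⟨y', hy', rfl⟩ <;>
      simp only [lcp_nil_left, lcp_nil_right, lcp_cons, lcp_self, if_true, if_false, combineMap,
        Bool.false_eq_true, Bool.true_eq_false, reduceIte]
    · exact congrArg (false :: ·) (c1 x hx x' hx')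
    · exact congrArg (true :: ·) (c2 y hy y' hy')

lemma embeds_combine {s1 s2 t1 t2 : Set Word} (h1 : Embeds s1 t1) (h2 : Embeds s2 t2) :
    Embeds (nodeSet s1 s2) (nodeSet t1 t2) := by
  obtain ⟨φ1, h1⟩ := h1; obtain ⟨φ2, h2⟩ := h2
  exact ⟨_, isEmbedding_combine h1 h2⟩

lemma false_mem_nodeSet {x : Word} {t1 t2 : Set Word} :
    false :: x ∈ nodeSet t1 t2 ↔ x ∈ t1 := by rw [cons_mem_nodeSet]; simp

lemma true_mem_nodeSet {x : Word} {t1 t2 : Set Word} :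
    true :: x ∈ nodeSet t1 t2 ↔ x ∈ t2 := by rw [cons_mem_nodeSet]; simp

lemma subtreeAt_cons_false (w : Word) (t1 t2 : Set Word) :
    subtreeAt (false :: w) (nodeSet t1 t2) = subtreeAt w t1 := by
  rw [subtreeAt_cons_nodeSet]; simp

lemma subtreeAt_cons_true (w : Word) (t1 t2 : Set Word) :
    subtreeAt (true :: w) (nodeSet t1 t2) = subtreeAt w t2 := by
  rw [subtreeAt_cons_nodeSet]; simp

lemma subtreeAt_false_nodeSet (t1 t2 : Set Word) :
    subtreeAt [false] (nodeSet t1 t2) = t1 := by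
  rw [subtreeAt_cons_false, subtreeAt_nil]

lemma subtreeAt_true_nodeSet (t1 t2 : Set Word) :
    subtreeAt [true] (nodeSet t1 t2) = t2 := by
  rw [subtreeAt_cons_true, subtreeAt_nil]
/-! ### Splitting an embedding of a nodeSet -/

lemma prefix_of_lcp_eq_left {u v : Word} (h : lcp u v = u) : u <+: v := by
  rw [← h]; exact lcp_prefix_right u v

/-- Stripping a common first letter from all images. -/
lemma embed_strip {s t : Set Word} {φ : Word → Word} {c0 : Bool}
    (hφ : IsEmbedding s t φ) (hkey : ∀ x ∈ s, ∃ y, φ x = c0 :: y) :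
    Embeds s (subtreeAt [c0] t) := by
  obtain ⟨m, i, l, c⟩ := hφ
  refine ⟨fun x => (φ x).tail, ?_, ?_, ?_, ?_⟩
  · intro x hx
    obtain ⟨y, hy⟩ := hkey x hx
    have h1 := m _ hx
    rw [hy] at h1
    show (φ x).tail ∈ subtreeAt [c0] t
    rw [hy]
    simpa [subtreeAt] using h1
  · intro x hx x' hx' hne hEq
    obtain ⟨y, hy⟩ := hkey x hx
    obtain ⟨y', hy'⟩ := hkey x' hx'
    have hEq' : (φ x).tail = (φ x').tail := hEq
    rw [hy, hy'] at hEq'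
    simp only [List.tail_cons] at hEq'
    exact i _ hx _ hx' hne (by rw [hy, hy', hEq'])
  · intro x hx x' hx' hl
    obtain ⟨y, hy⟩ := hkey x hx
    obtain ⟨y', hy'⟩ := hkey x' hx'
    have h1 := l _ hx _ hx' hl
    show wlex (φ x).tail (φ x').tail
    rw [hy, hy'] at h1 ⊢
    simpa [wlex_cons_iff] using h1
  · intro x hx x' hx'
    obtain ⟨y, hy⟩ := hkey x hx
    obtain ⟨y', hy'⟩ := hkey x' hx'
    have hc := c _ hx _ hx'
    rw [hy, hy'] at hc
    show (φ (lcp x x')).tail = lcp (φ x).tail (φ x').tail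
    rw [hy, hy', hc]
    simp [lcp_cons]

/-- Restricting an embedding of a `nodeSet` to one side. -/
lemma embed_precons {s1 s2 t : Set Word} {φ : Word → Word}
    (hφ : IsEmbedding (nodeSet s1 s2) t φ) (c0 : Bool) :
    IsEmbedding (if c0 then s2 else s1) t (fun x => φ (c0 :: x)) := by
  obtain ⟨m, i, l, c⟩ := hφ
  have hmem : ∀ x, x ∈ (if c0 then s2 else s1) → c0 :: x ∈ nodeSet s1 s2 := by
    intro x hx; rw [cons_mem_nodeSet]; exact hx
  refine ⟨fun x hx => m _ (hmem x hx), ?_, ?_, ?_⟩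
  · intro x hx x' hx' hne
    exact i _ (hmem x hx) _ (hmem x' hx') (by simpa using hne)
  · intro x hx x' hx' hl
    exact l _ (hmem x hx) _ (hmem x' hx') (wlex_cons hl)
  · intro x hx x' hx'
    show φ (c0 :: lcp x x') = _
    have : (c0 : Bool) :: lcp x x' = lcp (c0 :: x) (c0 :: x') := by rw [lcp_cons]; simp
    rw [this]
    exact c _ (hmem x hx) _ (hmem x' hx')

/-- If `φ` embeds `nodeSet s1 s2` into `t` with `φ [] = []`, then the two halves embed
into the two root subtrees of `t`. -/
lemma embed_split {s1 s2 t : Set Word} {φ : Word → Word}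
    (h1 : ([] : Word) ∈ s1) (h2 : ([] : Word) ∈ s2)
    (hφ : IsEmbedding (nodeSet s1 s2) t φ) (hw : φ [] = []) :
    Embeds s1 (subtreeAt [false] t) ∧ Embeds s2 (subtreeAt [true] t) := by
  obtain ⟨m, i, l, c⟩ := id hφ
  have hnil : ([] : Word) ∈ nodeSet s1 s2 := nil_mem_nodeSet _ _
  have hf : [false] ∈ nodeSet s1 s2 := by rw [cons_mem_nodeSet]; simpa
  have ht : [true] ∈ nodeSet s1 s2 := by rw [cons_mem_nodeSet]; simpa
  have hlcp : lcp (φ [false]) (φ [true]) = [] := by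
    rw [← c _ hf _ ht]; simpa [lcp_cons] using hw
  have hlex : wlex (φ [false]) (φ [true]) := l _ hf _ ht (wlex_false_true _ _)
  have hfne : φ [false] ≠ [] := fun hEq => i _ hf _ hnil (by simp) (hEq.trans hw.symm)
  have htne : φ [true] ≠ [] := fun hEq => i _ ht _ hnil (by simp) (hEq.trans hw.symm)
  obtain ⟨p', q', hp, hq⟩ := heads_of_lcp_nil hlcp hlex hfne htne
  have key : ∀ (c0 : Bool) (x : Word), (c0 :: x) ∈ nodeSet s1 s2 →
      ∃ y, φ (c0 :: x) = c0 :: y := by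
    intro c0 x hx
    have hc0 : [c0] ∈ nodeSet s1 s2 := by
      cases c0 with
      | false => exact hf
      | true => exact ht
    have hlcp2 : lcp [c0] (c0 :: x) = [c0] := by rw [lcp_cons]; simp [lcp_nil_left]
    have heq2 : φ [c0] = lcp (φ [c0]) (φ (c0 :: x)) := by rw [← c _ hc0 _ hx, hlcp2]
    have hpre : φ [c0] <+: φ (c0 :: x) := by rw [heq2]; exact lcp_prefix_right _ _
    obtain ⟨r, hr⟩ := hpre
    cases c0 with
    | false => rw [hp] at hr; exact ⟨p' ++ r, by rw [← hr]; simp⟩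
    | true => rw [hq] at hr; exact ⟨q' ++ r, by rw [← hr]; simp⟩
  constructor
  · have hpc : IsEmbedding s1 t (fun x => φ (false :: x)) := by
      simpa using embed_precons hφ false
    exact embed_strip hpc (fun x hx => key false x (by rw [cons_mem_nodeSet]; simpa))
  · have hpc : IsEmbedding s2 t (fun x => φ (true :: x)) := by
      simpa using embed_precons hφ true
    exact embed_strip hpc (fun x hx => key true x (by rw [cons_mem_nodeSet]; simpa))
/-! ### Facts about the interpolating trees τ -/

lemma tau_succ (r : ℕ) (hr : 1 ≤ r) :
    tau r = nodeSet (tau (r / 2)) (tau ((r - 1) / 2)) := by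
  match r, hr with
  | 1, _ =>
    show tau 1 = nodeSet (tau 0) (tau 0)
    ext w
    rcases w with _ | ⟨_ | _, x⟩ <;>
      simp [tau, nodeSet, graft]
  | (n + 2), _ =>
    show tau (n + 2) = _
    rw [tau]
    rfl

lemma nil_mem_tau (r : ℕ) : ([] : Word) ∈ tau r := by
  rcases Nat.eq_zero_or_pos r with rfl | hr
  · simp [tau]
  · rw [tau_succ r hr]; exact nil_mem_nodeSet _ _

lemma nodeSet_finite {t1 t2 : Set Word} (h1 : t1.Finite) (h2 : t2.Finite) :
    (nodeSet t1 t2).Finite := by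
  unfold nodeSet graft
  exact ((Set.finite_singleton _).union (h1.image _)).union (h2.image _)

lemma tau_finite (r : ℕ) : (tau r).Finite := by
  induction r using Nat.strong_induction_on with
  | _ r ih =>
    rcases Nat.eq_zero_or_pos r with rfl | hr
    · simp [tau]
    · rw [tau_succ r hr]
      exact nodeSet_finite (ih _ (by omega)) (ih _ (by omega))

lemma nodeSet_ncard {t1 t2 : Set Word} (h1 : t1.Finite) (h2 : t2.Finite) :
    (nodeSet t1 t2).ncard = 1 + t1.ncard + t2.ncard := by
  have hg1 : (graft false t1).ncard = t1.ncard :=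
    Set.ncard_image_of_injective _ (fun a b h => by simpa using h)
  have hg2 : (graft true t2).ncard = t2.ncard :=
    Set.ncard_image_of_injective _ (fun a b h => by simpa using h)
  have hd : Disjoint (graft false t1) (graft true t2) := by
    rw [Set.disjoint_left]
    rintro w ⟨x, _, rfl⟩ ⟨y, _, h⟩
    simp at h
  have hd2 : Disjoint ({[]} : Set Word) (graft false t1 ∪ graft true t2) := by
    rw [Set.disjoint_left]
    rintro w rfl h
    rcases h with ⟨x, _, h⟩ | ⟨x, _, h⟩ <;> simp at h
  unfold nodeSet
  rw [Set.union_assoc, Set.ncard_union_eq hd2 (Set.finite_singleton _)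
    ((h1.image _).union (h2.image _)),
    Set.ncard_union_eq hd (h1.image _) (h2.image _), hg1, hg2]
  simp [add_assoc]

lemma tau_ncard (r : ℕ) : r + 1 ≤ (tau r).ncard := by
  induction r using Nat.strong_induction_on with
  | _ r ih =>
    rcases Nat.eq_zero_or_pos r with rfl | hr
    · simp [tau]
    · rw [tau_succ r hr, nodeSet_ncard (tau_finite _) (tau_finite _)]
      have h1 := ih (r / 2) (by omega)
      have h2 := ih ((r - 1) / 2) (by omega)
      omega

lemma tau_mono {i j : ℕ} (h : i ≤ j) : Embeds (tau i) (tau j) := by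
  induction j using Nat.strong_induction_on generalizing i with
  | _ j ih =>
    rcases eq_or_lt_of_le h with rfl | hij
    · exact embeds_refl _
    · -- i < j, so j ≥ 1
      have hj : 1 ≤ j := by omega
      rcases Nat.eq_zero_or_pos i with rfl | hi
      · -- τ₀ = {[]} embeds into anything containing []
        refine ⟨id, fun u hu => ?_, fun u hu v hv hne => ?_, fun u hu v hv hl => ?_,
          fun u hu v hv => rfl⟩
        · simp only [tau, Set.mem_singleton_iff] at hu
          subst hu; exact nil_mem_tau j
        · simp only [tau, Set.mem_singleton_iff] at hu hv; subst hu; subst hv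
          exact absurd rfl hne
        · exact hl
      · rw [tau_succ i hi, tau_succ j hj]
        refine embeds_combine ?_ ?_
        · exact ih (j / 2) (by omega) (by omega)
        · exact ih ((j - 1) / 2) (by omega) (by omega)
/-! ### Basic facts about RHS -/

lemma embeds_tau_zero {t : Set Word} (h : ([] : Word) ∈ t) : Embeds (tau 0) t := by
  refine ⟨id, fun u hu => ?_, fun u hu v hv hne => ?_, fun u hu v hv hl => hl,
    fun u hu v hv => rfl⟩
  · simp only [tau, Set.mem_singleton_iff] at hu; subst hu; exact h
  · simp only [tau, Set.mem_singleton_iff] at hu hv; subst hu; subst hv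
    exact absurd rfl hne

lemma embedsSet_bddAbove {t : Set Word} (ht : t.Finite) :
    BddAbove {r | Embeds (tau r) t} := by
  refine ⟨t.ncard, fun r hr => ?_⟩
  obtain ⟨φ, m, i, _, _⟩ := hr
  have hinj : Set.InjOn φ (tau r) := fun a ha b hb hab => by
    by_contra hne; exact i a ha b hb hne hab
  have h1 : (φ '' tau r).ncard = (tau r).ncard := Set.ncard_image_of_injOn hinj
  have h2 : φ '' tau r ⊆ t := by rintro _ ⟨x, hx, rfl⟩; exact m x hx
  have h3 := Set.ncard_le_ncard h2 ht
  have h4 := tau_ncard r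
  omega

lemma RHS_le {t : Set Word} {n : ℕ} (h : ∀ r, Embeds (tau r) t → r ≤ n) :
    RHS t ≤ n := by
  unfold RHS
  rcases Set.eq_empty_or_nonempty {r | Embeds (tau r) t} with he | hne
  · rw [he, csSup_empty]; exact Nat.zero_le n
  · exact csSup_le hne h

lemma le_RHS {t : Set Word} (ht : t.Finite) {r : ℕ} (h : Embeds (tau r) t) :
    r ≤ RHS t := le_csSup (embedsSet_bddAbove ht) h

lemma embeds_tau_RHS {t : Set Word} (ht : t.Finite) (hne : ([] : Word) ∈ t) :
    Embeds (tau (RHS t)) t := by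
  have : RHS t ∈ {r | Embeds (tau r) t} :=
    Nat.sSup_mem ⟨0, embeds_tau_zero hne⟩ (embedsSet_bddAbove ht)
  exact this

lemma subtreeAt_finite {t : Set Word} (ht : t.Finite) (u : Word) :
    (subtreeAt u t).Finite := by
  have : subtreeAt u t = (fun v => u ++ v) ⁻¹' t := rfl
  rw [this]
  exact Set.Finite.preimage (fun a _ b _ h => by simpa using h) ht

lemma RHS_subtree_le {t : Set Word} (ht : t.Finite) (u : Word) :
    RHS (subtreeAt u t) ≤ RHS t := by
  refine RHS_le fun r hr => le_RHS ht (embeds_of_embeds_subtree hr)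

lemma RHS_leaf : RHS ({[]} : Set Word) = 0 := by
  refine Nat.le_zero.mp (RHS_le fun r hr => ?_)
  by_contra hr1
  have hr' : 1 ≤ r := by omega
  obtain ⟨φ, m, i, _, _⟩ := hr
  have hf : [false] ∈ tau r := by
    rw [tau_succ r hr', cons_mem_nodeSet]; simp [nil_mem_tau]
  have hnil : ([] : Word) ∈ tau r := nil_mem_tau r
  have h1 := m _ hf
  have h2 := m _ hnil
  simp only [Set.mem_singleton_iff] at h1 h2
  exact i _ hf _ hnil (by simp) (h1.trans h2.symm)

/-- The Horton–Strahler recursion function. -/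
def R (a b : ℕ) : ℕ := max (max a b) (max (2 * min a (b + 1)) (2 * min a b + 1))

lemma R_ge_split {a b r : ℕ} (h1 : r / 2 ≤ a) (h2 : (r - 1) / 2 ≤ b) : r ≤ R a b := by
  refine le_trans ?_ (le_max_right (max a b) _)
  rcases Nat.even_or_odd r with ⟨k, hk⟩ | ⟨k, hk⟩
  · refine le_trans ?_ (le_max_left _ (2 * min a b + 1))
    have : k ≤ min a (b + 1) := le_min (by omega) (by omega)
    omega
  · refine le_trans ?_ (le_max_right (2 * min a (b + 1)) _)
    have : k ≤ min a b := le_min (by omega) (by omega)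
    omega

/-- The main recursion: for a tree whose root is internal,
`RHS t = R (RHS t₁) (RHS t₂)`. -/
lemma RHS_node {t : Set Word} (ht : t.Finite) (hnil : ([] : Word) ∈ t)
    (hf : [false] ∈ t) (htr : [true] ∈ t) :
    RHS t = R (RHS (subtreeAt [false] t)) (RHS (subtreeAt [true] t)) := by
  set a := RHS (subtreeAt [false] t) with ha
  set b := RHS (subtreeAt [true] t) with hb
  have hfin1 : (subtreeAt [false] t).Finite := subtreeAt_finite ht _
  have hfin2 : (subtreeAt [true] t).Finite := subtreeAt_finite ht _
  have hnil1 : ([] : Word) ∈ subtreeAt [false] t := by simpa [subtreeAt] using hf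
  have hnil2 : ([] : Word) ∈ subtreeAt [true] t := by simpa [subtreeAt] using htr
  have hnode : t = nodeSet (subtreeAt [false] t) (subtreeAt [true] t) := nodeSet_decomp hnil
  -- embeddings witnessing each candidate value
  have emb1 : Embeds (tau a) t :=
    embeds_of_embeds_subtree (embeds_tau_RHS hfin1 hnil1)
  have emb2 : Embeds (tau b) t :=
    embeds_of_embeds_subtree (embeds_tau_RHS hfin2 hnil2)
  have embE : ∀ m : ℕ, m ≤ a → m ≤ b + 1 → Embeds (tau (2 * m)) t := by
    intro m hm1 hm2
    rcases Nat.eq_zero_or_pos m with rfl | hm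
    · exact embeds_tau_zero hnil
    · rw [show (2 * m) = (2 * m) from rfl, tau_succ (2 * m) (by omega)]
      have e1 : Embeds (tau (2 * m / 2)) (subtreeAt [false] t) :=
        (tau_mono (by omega)).trans (embeds_tau_RHS hfin1 hnil1)
      have e2 : Embeds (tau ((2 * m - 1) / 2)) (subtreeAt [true] t) :=
        (tau_mono (by omega)).trans (embeds_tau_RHS hfin2 hnil2)
      rw [hnode]
      exact embeds_combine e1 e2
  have embO : ∀ m : ℕ, m ≤ a → m ≤ b → Embeds (tau (2 * m + 1)) t := by
    intro m hm1 hm2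
    rw [tau_succ (2 * m + 1) (by omega)]
    have e1 : Embeds (tau ((2 * m + 1) / 2)) (subtreeAt [false] t) :=
      (tau_mono (by omega)).trans (embeds_tau_RHS hfin1 hnil1)
    have e2 : Embeds (tau ((2 * m + 1 - 1) / 2)) (subtreeAt [true] t) :=
      (tau_mono (by omega)).trans (embeds_tau_RHS hfin2 hnil2)
    rw [hnode]
    exact embeds_combine e1 e2
  have hge : R a b ≤ RHS t := by
    have c1 : a ≤ RHS t := le_RHS ht emb1
    have c2 : b ≤ RHS t := le_RHS ht emb2
    have c3 : 2 * min a (b + 1) ≤ RHS t :=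
      le_RHS ht (embE _ (min_le_left _ _) (min_le_right _ _))
    have c4 : 2 * min a b + 1 ≤ RHS t :=
      le_RHS ht (embO _ (min_le_left _ _) (min_le_right _ _))
    simp only [R, max_le_iff]
    exact ⟨⟨c1, c2⟩, c3, c4⟩
  have hle : RHS t ≤ R a b := by
    refine RHS_le fun r hr => ?_
    rcases Nat.eq_zero_or_pos r with rfl | hr1
    · exact Nat.zero_le _
    obtain ⟨φ, hφ⟩ := hr
    rcases hk : φ [] with _ | ⟨c0, w'⟩
    · -- φ [] = []; split
      have hsp := hφ
      rw [tau_succ r hr1] at hsp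
      obtain ⟨e1, e2⟩ := embed_split (nil_mem_tau _) (nil_mem_tau _) hsp hk
      have b1 : r / 2 ≤ a := le_RHS hfin1 e1
      have b2 : (r - 1) / 2 ≤ b := le_RHS hfin2 e2
      exact R_ge_split b1 b2
    · -- all images start with c0
      have hpre : ∀ u ∈ tau r, ∃ y, φ u = c0 :: y := by
        intro u hu
        have hc := hφ.2.2.2 [] (nil_mem_tau r) u hu
        rw [lcp_nil_left, hk] at hc
        have : φ [] <+: φ u := by rw [hk, hc]; exact lcp_prefix_right _ _
        rw [hk] at this
        obtain ⟨z, hz⟩ := this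
        exact ⟨w' ++ z, by rw [← hz]; simp⟩
      have hstrip : Embeds (tau r) (subtreeAt [c0] t) := embed_strip hφ hpre
      have : r ≤ RHS (subtreeAt [c0] t) :=
        le_RHS (subtreeAt_finite ht _) hstrip
      have hRc : RHS (subtreeAt [c0] t) ≤ max a b := by
        cases c0 with
        | false => rw [ha]; exact le_max_left _ _
        | true => rw [hb]; exact le_max_right _ _
      simp only [R]
      calc r ≤ max a b := le_trans this hRc
        _ ≤ _ := le_max_left _ _
  exact le_antisymm hle hge
/-! ### Arithmetic consequences of the recursion -/

lemma R_end {a b h : ℕ} (hh : 1 ≤ h) (hR : R a b = h) (ha : a ≠ h) (hb : b ≠ h)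
    (ha' : a ≤ h) (hb' : b ≤ h) :
    (h % 2 = 0 → b = (h + 1) / 2 - 1 ∧ h / 2 ≤ a ∧ a ≤ h - 1) ∧
    (h % 2 = 1 → a = (h + 1) / 2 - 1 ∧ h / 2 ≤ b ∧ b ≤ h - 1) := by
  simp only [R, Nat.min_def, Nat.max_def] at hR
  split_ifs at hR <;> omega

lemma R_spine_right {k h : ℕ} (hh : 1 ≤ h) (hk : k ≤ h) (hR : R k h = h) :
    2 * k + 1 ≤ h := by
  simp only [R, Nat.min_def, Nat.max_def] at hR
  split_ifs at hR <;> omega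

lemma R_spine_left {k h : ℕ} (hh : 1 ≤ h) (hk : k ≤ h) (hR : R h k = h) :
    2 * k + 2 ≤ h := by
  simp only [R, Nat.min_def, Nat.max_def] at hR
  split_ifs at hR <;> omega

lemma R_build_right {k h : ℕ} (h1 : 2 * k + 2 ≤ h) : R h k = h := by
  simp only [R, Nat.min_def, Nat.max_def]
  split_ifs <;> omega

lemma R_build_left {k h : ℕ} (h1 : 2 * k + 1 ≤ h) : R k h = h := by
  simp only [R, Nat.min_def, Nat.max_def]
  split_ifs <;> omega

lemma R_core_even {a h : ℕ} (hp : h % 2 = 0) (hh : 1 ≤ h) (h1 : h / 2 ≤ a)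
    (h2 : a ≤ h - 1) : R a ((h + 1) / 2 - 1) = h := by
  simp only [R, Nat.min_def, Nat.max_def]
  split_ifs <;> omega

lemma R_core_odd {b h : ℕ} (hp : h % 2 = 1) (h1 : h / 2 ≤ b) (h2 : b ≤ h - 1) :
    R ((h + 1) / 2 - 1) b = h := by
  simp only [R, Nat.min_def, Nat.max_def]
  split_ifs <;> omega

/-! ### Full binary trees -/

lemma subtree_fbt {t : Set Word} (h : IsFullBinaryTree t) {u : Word} (hu : u ∈ t) :
    IsFullBinaryTree (subtreeAt u t) := by
  obtain ⟨⟨hfin, hnil, hpc⟩, hfull⟩ := h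
  refine ⟨⟨subtreeAt_finite hfin u, by simpa [subtreeAt] using hu, ?_⟩, ?_⟩
  · intro v hv w hw
    obtain ⟨q, rfl⟩ := hw
    exact hpc _ hv _ ⟨q, by rw [List.append_assoc]⟩
  · intro v hv
    have := hfull (u ++ v) hv
    simpa [subtreeAt, List.append_assoc] using this

lemma fbt_leaf_or {t : Set Word} (h : IsFullBinaryTree t) :
    t = {[]} ∨ ([false] ∈ t ∧ [true] ∈ t) := by
  obtain ⟨⟨hfin, hnil, hpc⟩, hfull⟩ := h
  by_cases hf : [false] ∈ t
  · exact Or.inr ⟨hf, (hfull [] hnil).mp hf⟩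
  · left
    ext w
    simp only [Set.mem_singleton_iff]
    constructor
    · intro hw
      by_contra hne
      cases w with
      | nil => exact hne rfl
      | cons c x =>
        have h1 : [c] ∈ t := hpc _ hw [c] ⟨x, rfl⟩
        cases c with
        | false => exact hf h1
        | true => exact hf ((hfull [] hnil).mpr h1)
    · rintro rfl; exact hnil

lemma nodeSet_fbt {t1 t2 : Set Word} (h1 : IsFullBinaryTree t1) (h2 : IsFullBinaryTree t2) :
    IsFullBinaryTree (nodeSet t1 t2) := by
  obtain ⟨⟨hfin1, hnil1, hpc1⟩, hfull1⟩ := h1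
  obtain ⟨⟨hfin2, hnil2, hpc2⟩, hfull2⟩ := h2
  refine ⟨⟨nodeSet_finite hfin1 hfin2, nil_mem_nodeSet _ _, ?_⟩, ?_⟩
  · intro u hu v hv
    rcases mem_nodeSet_elim hu with rfl | ⟨x, hx, rfl⟩ | ⟨y, hy, rfl⟩
    · rw [List.prefix_nil] at hv; subst hv; exact nil_mem_nodeSet _ _
    · cases v with
      | nil => exact nil_mem_nodeSet _ _
      | cons c z =>
        rw [List.cons_prefix_cons] at hv
        obtain ⟨rfl, hv⟩ := hv
        rw [cons_mem_nodeSet]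
        exact hpc1 _ hx _ hv
    · cases v with
      | nil => exact nil_mem_nodeSet _ _
      | cons c z =>
        rw [List.cons_prefix_cons] at hv
        obtain ⟨rfl, hv⟩ := hv
        rw [cons_mem_nodeSet]
        exact hpc2 _ hy _ hv
  · intro u hu
    rcases mem_nodeSet_elim hu with rfl | ⟨x, hx, rfl⟩ | ⟨y, hy, rfl⟩
    · simp only [List.nil_append, cons_mem_nodeSet]
      simp [hnil1, hnil2]
    · simp only [List.cons_append, cons_mem_nodeSet]
      simpa using hfull1 _ hx
    · simp only [List.cons_append, cons_mem_nodeSet]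
      simpa using hfull2 _ hy

lemma fbt_children_of_RHS_pos {t : Set Word} (h : IsFullBinaryTree t) (hpos : 1 ≤ RHS t) :
    [false] ∈ t ∧ [true] ∈ t := by
  rcases fbt_leaf_or h with rfl | hc
  · rw [RHS_leaf] at hpos; omega
  · exact hc

lemma Sv_nil (t : Set Word) : Sv [] t = RHS t := rfl

lemma Sv_le_of_prefix {t : Set Word} (ht : t.Finite) {w u : Word} (h : w <+: u) :
    Sv u t ≤ Sv w t := by
  obtain ⟨q, rfl⟩ := h
  unfold Sv
  rw [subtreeAt_append]
  exact RHS_subtree_le (subtreeAt_finite ht w) q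

lemma Sv_le_RHS {t : Set Word} (ht : t.Finite) (u : Word) : Sv u t ≤ RHS t :=
  RHS_subtree_le ht u
/-! ### Part 1: the decomposition exists and is unique -/

lemma spn_eq_word {u : Word} {spn : List (Bool × Set Word)} {g : Fin u.length → Set Word}
    (h : spn = (List.finRange u.length).map (fun j => (! u.get j, g j))) :
    u = spn.map (fun p => !p.1) := by
  subst h
  refine List.ext_get (by simp) ?_
  intro n h1 h2
  simp [List.get_eq_getElem]

lemma decomp_exists_unique {h : ℕ} (t : Set Word) (ht : MemB h t) :
    ∃! x : Set Word × Set Word × List (Bool × Set Word),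
      TreeDecomp h t x.1 x.2.1 x.2.2 := by
  obtain ⟨⟨⟨hfin, hnil, hpc⟩, hfull⟩, hRHS⟩ := ht
  have hXf : {w | w ∈ t ∧ Sv w t = h}.Finite := hfin.subset (fun w hw => hw.1)
  have hXne : ([] : Word) ∈ {w | w ∈ t ∧ Sv w t = h} := ⟨hnil, by rw [Sv_nil, hRHS]⟩
  have hFne : hXf.toFinset.Nonempty := ⟨[], (Set.Finite.mem_toFinset _).mpr hXne⟩
  obtain ⟨u, humem, humax⟩ : ∃ u, (u ∈ t ∧ Sv u t = h) ∧
      ∀ w ∈ t, Sv w t = h → w = u ∨ wlex w u := by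
    refine ⟨hXf.toFinset.max' hFne, ?_, ?_⟩
    · have := Finset.max'_mem _ hFne
      rwa [Set.Finite.mem_toFinset] at this
    · intro w hw hSw
      have hwF : w ∈ hXf.toFinset := (Set.Finite.mem_toFinset _).mpr ⟨hw, hSw⟩
      rcases lt_or_eq_of_le (Finset.le_max' _ w hwF) with hlt | heq
      · exact Or.inr hlt
      · exact Or.inl heq
  refine ⟨⟨subtreeAt (u ++ [decide (h % 2 = 0)]) t, subtreeAt (u ++ [decide (h % 2 = 1)]) t,
    (List.finRange u.length).map
      (fun j => (! u.get j, subtreeAt (u.take (j : ℕ) ++ [! u.get j]) t))⟩,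
    ⟨u, humem.1, humem.2, humax, rfl, rfl, rfl⟩, ?_⟩
  rintro ⟨x1, x2, x3⟩ ⟨u', hu'1, hu'2, hu'max, hx2, hx1, hx3⟩
  have huu : u' = u := by
    rcases humax u' hu'1 hu'2 with heq | hlt
    · exact heq
    · rcases hu'max u humem.1 humem.2 with heq | hlt'
      · exact heq.symm
      · exact absurd hlt (wlex_asymm hlt')
  subst huu
  simp only [Prod.mk.injEq]
  exact ⟨hx1, hx2, hx3⟩

/-! ### Reconstruction of a tree from its decomposition (uniqueness) -/

lemma getElem_append_cons (p x : Word) (a : Bool) (hlen : p.length < (p ++ a :: x).length) :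
    (p ++ a :: x)[p.length] = a := by
  rw [List.getElem_append_right (le_refl p.length)]
  simp

lemma decomp_ext {h : ℕ} {t t' tfix tfree : Set Word} {spn : List (Bool × Set Word)}
    (hbt : IsBinaryTree t) (hbt' : IsBinaryTree t')
    (hd : TreeDecomp h t tfix tfree spn) (hd' : TreeDecomp h t' tfix tfree spn) :
    t = t' := by
  obtain ⟨hfin, hnil, hpc⟩ := hbt
  obtain ⟨hfin', hnil', hpc'⟩ := hbt'
  obtain ⟨u, hu1, hu2, hu3, hfree, hfix, hspn⟩ := hd
  obtain ⟨u', hu'1, hu'2, hu'3, hfree', hfix', hspn'⟩ := hd'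
  have huu : u' = u := by rw [spn_eq_word hspn', spn_eq_word hspn]
  rw [huu] at hu'1 hfree' hfix' hspn'
  -- the spinal subtree equations
  have hspine : ∀ (j : Fin u.length),
      subtreeAt (u.take (j : ℕ) ++ [! u.get j]) t
        = subtreeAt (u.take (j : ℕ) ++ [! u.get j]) t' := by
    intro j
    have e1 : spn.get (Fin.cast (by rw [hspn]; simp) j)
        = (! u.get j, subtreeAt (u.take (j : ℕ) ++ [! u.get j]) t) := by
      rw [List.get_of_eq hspn]; simp [List.get_eq_getElem]
    have e2 : spn.get (Fin.cast (by rw [hspn]; simp) j)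
        = (! u.get j, subtreeAt (u.take (j : ℕ) ++ [! u.get j]) t') := by
      rw [List.get_of_eq hspn']; simp [List.get_eq_getElem]
    exact congrArg Prod.snd (e1.symm.trans e2)
  ext w
  rcases lcp_cases u w with hc | hc | ⟨a, b, x, y, hab, hx, hy⟩
  · -- u <+: w
    have hpre : u <+: w := prefix_of_lcp_eq_left hc
    obtain ⟨q, rfl⟩ := hpre
    cases q with
    | nil => simp only [List.append_nil]; exact ⟨fun _ => hu'1, fun _ => hu1⟩
    | cons c rest =>
      have hmem : ∀ s : Set Word, (u ++ c :: rest ∈ s ↔ rest ∈ subtreeAt (u ++ [c]) s) := by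
        intro s
        show _ ↔ (u ++ [c]) ++ rest ∈ s
        rw [List.append_assoc]
        rfl
      rw [hmem t, hmem t']
      cases c with
      | false =>
        rcases Nat.mod_two_eq_zero_or_one h with hp | hp
        · have hdec : [(false : Bool)] = [decide (h % 2 = 1)] := by simp [hp]
          rw [hdec, ← hfree, hfree']
        · have hdec : [(false : Bool)] = [decide (h % 2 = 0)] := by simp [hp]
          rw [hdec, ← hfix, hfix']
      | true =>
        rcases Nat.mod_two_eq_zero_or_one h with hp | hp
        · have hdec : [(true : Bool)] = [decide (h % 2 = 0)] := by simp [hp]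
          rw [hdec, ← hfix, hfix']
        · have hdec : [(true : Bool)] = [decide (h % 2 = 1)] := by simp [hp]
          rw [hdec, ← hfree, hfree']
  · -- w <+: u
    have hpre : w <+: u := by rw [← hc]; exact lcp_prefix_left u w
    exact ⟨fun _ => hpc' _ hu'1 _ hpre, fun _ => hpc _ hu1 _ hpre⟩
  · -- divergence
    have hjlen : (lcp u w).length < u.length := by
      conv_rhs => rw [hx]
      simp
    have htake : u.take (lcp u w).length = lcp u w :=
      (List.prefix_iff_eq_take.mp (lcp_prefix_left u w)).symm
    have hget : u.get ⟨(lcp u w).length, hjlen⟩ = a := by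
      rw [List.get_of_eq hx]
      simp only [List.get_eq_getElem]
      exact getElem_append_cons _ x a (by rw [← hx]; exact hjlen)
    have hb : b = ! a := by
      cases a <;> cases b <;> first | rfl | exact absurd rfl hab
    have hkey := hspine ⟨(lcp u w).length, hjlen⟩
    simp only [hget, htake] at hkey
    have hmem : ∀ s : Set Word,
        (lcp u w ++ (!a) :: y ∈ s ↔ y ∈ subtreeAt (lcp u w ++ [!a]) s) := by
      intro s
      show _ ↔ (lcp u w ++ [!a]) ++ y ∈ s
      rw [List.append_assoc]
      rfl
    rw [hy, hb, hmem t, hmem t', hkey]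
/-! ### Part 2: the decomposition lands in B'_h -/

lemma take_succ_eq {u : Word} {j : ℕ} (hj : j < u.length) :
    u.take (j + 1) = u.take j ++ [u.get ⟨j, hj⟩] := by
  rw [List.take_succ]
  simp [List.getElem?_eq_getElem hj]

lemma mem_of_subtree_cons {t : Set Word} {w : Word} {c : Bool}
    (h : [c] ∈ subtreeAt w t) : w ++ [c] ∈ t := h

lemma decomp_memB' {h : ℕ} (hh : 1 ≤ h) {t tfix tfree : Set Word}
    {spn : List (Bool × Set Word)} (ht : MemB h t)
    (hd : TreeDecomp h t tfix tfree spn) : MemB' h tfix tfree spn := by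
  obtain ⟨hfbt, hRHS⟩ := ht
  obtain ⟨hbt, hfull⟩ := id hfbt
  obtain ⟨hfin, hnil, hpc⟩ := id hbt
  obtain ⟨u, hu1, hu2, hu3, hfree, hfix, hspn⟩ := hd
  -- generic analysis at a vertex w on the spine (w a prefix of u, with both children)
  have hSv_eq : ∀ w : Word, w <+: u → Sv w t = h := by
    intro w hw
    refine le_antisymm (hRHS ▸ Sv_le_RHS hfin w) ?_
    calc h = Sv u t := hu2.symm
      _ ≤ Sv w t := Sv_le_of_prefix hfin hw
  have hchild_mem : ∀ w : Word, w ∈ t → 1 ≤ Sv w t →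
      w ++ [false] ∈ t ∧ w ++ [true] ∈ t := by
    intro w hw hpos
    have hfbt' : IsFullBinaryTree (subtreeAt w t) := subtree_fbt hfbt hw
    have := fbt_children_of_RHS_pos hfbt' hpos
    exact this
  have hrec : ∀ w : Word, w ∈ t → 1 ≤ Sv w t →
      Sv w t = R (Sv (w ++ [false]) t) (Sv (w ++ [true]) t) := by
    intro w hw hpos
    obtain ⟨hcf, hct⟩ := hchild_mem w hw hpos
    have h1 : [false] ∈ subtreeAt w t := hcf
    have h2 : [true] ∈ subtreeAt w t := hct
    have := RHS_node (subtreeAt_finite hfin w) (by simpa [subtreeAt] using hw) h1 h2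
    unfold Sv
    rw [subtreeAt_append w [false], subtreeAt_append w [true]]
    exact this
  have hSv_child_le : ∀ (w : Word) (c : Bool), Sv (w ++ [c]) t ≤ h := by
    intro w c
    rw [← hRHS]
    exact Sv_le_RHS hfin _
  -- the two children of u
  have hSu1 : 1 ≤ Sv u t := hu2 ▸ hh
  obtain ⟨hcf, hct⟩ := hchild_mem u hu1 hSu1
  have hane : ∀ c : Bool, Sv (u ++ [c]) t ≠ h := by
    intro c heq
    have hmem : u ++ [c] ∈ t := by
      cases c with
      | false => exact hcf
      | true => exact hct
    rcases hu3 (u ++ [c]) hmem heq with heq2 | hlt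
    · have := congrArg List.length heq2; simp at this
    · have hlt2 : wlex u (u ++ [c]) :=
        wlex_of_prefix ⟨[c], rfl⟩ (by intro hEq; have := congrArg List.length hEq; simp at this)
      exact wlex_asymm hlt2 hlt
  have hurec : R (Sv (u ++ [false]) t) (Sv (u ++ [true]) t) = h :=
    (hrec u hu1 hSu1).symm.trans hu2
  have hends := R_end hh hurec (hane false) (hane true) (hSv_child_le u false)
    (hSv_child_le u true)
  refine ⟨?_, ?_, ?_⟩
  · -- tfix
    rcases Nat.mod_two_eq_zero_or_one h with hp | hp
    · have hfix2 : tfix = subtreeAt (u ++ [true]) t := by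
        rw [hfix]; simp [hp]
      obtain ⟨hb, -, -⟩ := hends.1 hp
      exact ⟨hfix2 ▸ subtree_fbt hfbt hct, hfix2 ▸ hb⟩
    · have hfix2 : tfix = subtreeAt (u ++ [false]) t := by
        rw [hfix]; simp [hp]
      obtain ⟨ha, -, -⟩ := hends.2 hp
      exact ⟨hfix2 ▸ subtree_fbt hfbt hcf, hfix2 ▸ ha⟩
  · -- tfree
    rcases Nat.mod_two_eq_zero_or_one h with hp | hp
    · have hfree2 : tfree = subtreeAt (u ++ [false]) t := by
        rw [hfree]; simp [hp]
      obtain ⟨-, h1, h2⟩ := hends.1 hp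
      exact ⟨Sv (u ++ [false]) t, h1, h2, hfree2 ▸ subtree_fbt hfbt hcf, hfree2 ▸ rfl⟩
    · have hfree2 : tfree = subtreeAt (u ++ [true]) t := by
        rw [hfree]; simp [hp]
      obtain ⟨-, h1, h2⟩ := hends.2 hp
      exact ⟨Sv (u ++ [true]) t, h1, h2, hfree2 ▸ subtree_fbt hfbt hct, hfree2 ▸ rfl⟩
  · -- the spinal data
    intro p hp
    rw [hspn] at hp
    simp only [List.mem_map, List.mem_finRange, true_and] at hp
    obtain ⟨j, rfl⟩ := hp
    have htkpre : u.take (j : ℕ) <+: u := List.take_prefix _ u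
    have htkpre1 : u.take ((j : ℕ) + 1) <+: u := List.take_prefix _ u
    have htk1 : u.take ((j : ℕ) + 1) = u.take (j : ℕ) ++ [u.get j] := take_succ_eq j.isLt
    have hwmem : u.take (j : ℕ) ∈ t := hpc u hu1 _ htkpre
    have hwS : Sv (u.take (j : ℕ)) t = h := hSv_eq _ htkpre
    have hwS1 : Sv (u.take (j : ℕ) ++ [u.get j]) t = h := by
      rw [← htk1]; exact hSv_eq _ htkpre1
    have hwrec : R (Sv (u.take (j : ℕ) ++ [false]) t) (Sv (u.take (j : ℕ) ++ [true]) t) = h :=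
      (hrec _ hwmem (hwS ▸ hh)).symm.trans hwS
    obtain ⟨hwcf, hwct⟩ := hchild_mem _ hwmem (hwS ▸ hh)
    rcases hgj : u.get j with _ | _
    · -- u_j = false (spine goes left); sibling label true
      rw [hgj] at hwS1
      rw [hwS1] at hwrec
      have hk := R_spine_left hh (hSv_child_le (u.take (j : ℕ)) true) hwrec
      simp only [Bool.not_false]
      refine ⟨Sv (u.take (j : ℕ) ++ [true]) t, ⟨subtree_fbt hfbt hwct, rfl⟩, ?_⟩
      simp only [Bool.not_false, if_true]
      omega
    · -- u_j = true (spine goes right); sibling label false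
      rw [hgj] at hwS1
      rw [hwS1] at hwrec
      have hk := R_spine_right hh (hSv_child_le (u.take (j : ℕ)) false) hwrec
      simp only [Bool.not_true]
      refine ⟨Sv (u.take (j : ℕ) ++ [false]) t, ⟨subtree_fbt hfbt hwcf, rfl⟩, ?_⟩
      simp only [Bool.not_true, Bool.false_eq_true, if_false]
      omega
/-! ### Part 3: reconstruction -/

def buildSpn (spn : List (Bool × Set Word)) (core : Set Word) : Set Word :=
  spn.foldr (fun p cur => if p.1 then nodeSet cur p.2 else nodeSet p.2 cur) core

lemma buildSpn_nil (core : Set Word) : buildSpn [] core = core := rfl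

lemma buildSpn_cons (p : Bool × Set Word) (rest : List (Bool × Set Word)) (core : Set Word) :
    buildSpn (p :: rest) core =
      if p.1 then nodeSet (buildSpn rest core) p.2 else nodeSet p.2 (buildSpn rest core) := rfl

lemma buildSpn_props {h : ℕ} (hh : 1 ≤ h) {core : Set Word} (hfbt : IsFullBinaryTree core)
    (hcR : RHS core = h) (hmax : ∀ w ∈ core, Sv w core = h → w = []) :
    ∀ spn : List (Bool × Set Word),
    (∀ p ∈ spn, IsFullBinaryTree p.2 ∧
      (if p.1 then 2 * RHS p.2 + 2 ≤ h else 2 * RHS p.2 + 1 ≤ h)) →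
    IsFullBinaryTree (buildSpn spn core) ∧
    RHS (buildSpn spn core) = h ∧
    subtreeAt (spn.map (fun p => !p.1)) (buildSpn spn core) = core ∧
    (∀ w ∈ buildSpn spn core, Sv w (buildSpn spn core) = h →
      w <+: spn.map (fun p => !p.1)) ∧
    (∀ j (hj : j < spn.length),
      subtreeAt ((spn.map (fun p => !p.1)).take j ++ [(spn.get ⟨j, hj⟩).1])
        (buildSpn spn core) = (spn.get ⟨j, hj⟩).2) := by
  intro spn
  induction spn with
  | nil =>
    intro _
    refine ⟨hfbt, hcR, rfl, ?_, ?_⟩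
    · intro w hw hS
      rw [hmax w hw hS]
      exact List.nil_prefix
    · intro j hj; simp at hj
  | cons p rest ih =>
    intro hsp
    obtain ⟨hpfbt, hpbound⟩ := hsp p List.mem_cons_self
    have hpfin : p.2.Finite := hpfbt.1.1
    have hpnil : ([] : Word) ∈ p.2 := hpfbt.1.2.1
    obtain ⟨ihfbt, ihR, ihsub, ihmax, ihspn⟩ := ih (fun q hq => hsp q (List.mem_cons_of_mem p hq))
    have hcurfin : (buildSpn rest core).Finite := ihfbt.1.1
    have hcurnil : ([] : Word) ∈ buildSpn rest core := ihfbt.1.2.1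
    cases hb : p.1 with
    | true =>
      rw [hb] at hpbound
      simp only [if_true] at hpbound
      have hkh : RHS p.2 < h := by omega
      have hT : buildSpn (p :: rest) core = nodeSet (buildSpn rest core) p.2 := by
        rw [buildSpn_cons, hb]; simp
      have hTfbt : IsFullBinaryTree (buildSpn (p :: rest) core) := by
        rw [hT]; exact nodeSet_fbt ihfbt hpfbt
      have hTR : RHS (buildSpn (p :: rest) core) = h := by
        rw [hT, RHS_node (nodeSet_finite hcurfin hpfin) (nil_mem_nodeSet _ _)
          (false_mem_nodeSet.mpr hcurnil) (true_mem_nodeSet.mpr hpnil),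
          subtreeAt_false_nodeSet, subtreeAt_true_nodeSet, ihR]
        exact R_build_right hpbound
      refine ⟨hTfbt, hTR, ?_, ?_, ?_⟩
      · rw [hT]
        simp only [List.map_cons, hb, Bool.not_true]
        rw [subtreeAt_cons_false]
        exact ihsub
      · intro w hw hS
        simp only [List.map_cons, hb, Bool.not_true]
        cases w with
        | nil => exact List.nil_prefix
        | cons c w' =>
          rw [hT] at hw
          cases c with
          | true =>
            rw [true_mem_nodeSet] at hw
            have hSw : Sv (true :: w') (buildSpn (p :: rest) core) = Sv w' p.2 := by
              unfold Sv
              rw [hT, subtreeAt_cons_true]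
            have hle : Sv w' p.2 ≤ RHS p.2 := Sv_le_RHS hpfin w'
            omega
          | false =>
            rw [false_mem_nodeSet] at hw
            have hSw : Sv (false :: w') (buildSpn (p :: rest) core)
                = Sv w' (buildSpn rest core) := by
              unfold Sv
              rw [hT, subtreeAt_cons_false]
            have := ihmax w' hw (by rw [← hSw, hS])
            exact List.cons_prefix_cons.mpr ⟨rfl, this⟩
      · intro j hj
        cases j with
        | zero =>
          show subtreeAt ([] ++ [p.1]) (buildSpn (p :: rest) core) = p.2
          rw [List.nil_append, hT, hb, subtreeAt_true_nodeSet]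
        | succ j' =>
          have hj' : j' < rest.length := by simpa using hj
          have e1 : (p :: rest).get ⟨j' + 1, hj⟩ = rest.get ⟨j', hj'⟩ := rfl
          rw [e1]
          simp only [List.map_cons, hb, Bool.not_true, List.take_succ_cons]
          rw [List.cons_append, hT, subtreeAt_cons_false]
          exact ihspn j' hj'
    | false =>
      rw [hb] at hpbound
      simp only [Bool.false_eq_true, if_false] at hpbound
      have hkh : RHS p.2 < h := by omega
      have hT : buildSpn (p :: rest) core = nodeSet p.2 (buildSpn rest core) := by
        rw [buildSpn_cons, hb]; simp
      have hTfbt : IsFullBinaryTree (buildSpn (p :: rest) core) := by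
        rw [hT]; exact nodeSet_fbt hpfbt ihfbt
      have hTR : RHS (buildSpn (p :: rest) core) = h := by
        rw [hT, RHS_node (nodeSet_finite hpfin hcurfin) (nil_mem_nodeSet _ _)
          (false_mem_nodeSet.mpr hpnil) (true_mem_nodeSet.mpr hcurnil),
          subtreeAt_false_nodeSet, subtreeAt_true_nodeSet, ihR]
        exact R_build_left hpbound
      refine ⟨hTfbt, hTR, ?_, ?_, ?_⟩
      · rw [hT]
        simp only [List.map_cons, hb, Bool.not_false]
        rw [subtreeAt_cons_true]
        exact ihsub
      · intro w hw hS
        simp only [List.map_cons, hb, Bool.not_false]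
        cases w with
        | nil => exact List.nil_prefix
        | cons c w' =>
          rw [hT] at hw
          cases c with
          | false =>
            rw [false_mem_nodeSet] at hw
            have hSw : Sv (false :: w') (buildSpn (p :: rest) core) = Sv w' p.2 := by
              unfold Sv
              rw [hT, subtreeAt_cons_false]
            have hle : Sv w' p.2 ≤ RHS p.2 := Sv_le_RHS hpfin w'
            omega
          | true =>
            rw [true_mem_nodeSet] at hw
            have hSw : Sv (true :: w') (buildSpn (p :: rest) core)
                = Sv w' (buildSpn rest core) := by
              unfold Sv
              rw [hT, subtreeAt_cons_true]
            have := ihmax w' hw (by rw [← hSw, hS])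
            exact List.cons_prefix_cons.mpr ⟨rfl, this⟩
      · intro j hj
        cases j with
        | zero =>
          show subtreeAt ([] ++ [p.1]) (buildSpn (p :: rest) core) = p.2
          rw [List.nil_append, hT, hb, subtreeAt_false_nodeSet]
        | succ j' =>
          have hj' : j' < rest.length := by simpa using hj
          have e1 : (p :: rest).get ⟨j' + 1, hj⟩ = rest.get ⟨j', hj'⟩ := rfl
          rw [e1]
          simp only [List.map_cons, hb, Bool.not_false, List.take_succ_cons]
          rw [List.cons_append, hT, subtreeAt_cons_true]
          exact ihspn j' hj'
def coreOf (h : ℕ) (tfix tfree : Set Word) : Set Word :=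
  if h % 2 = 0 then nodeSet tfree tfix else nodeSet tfix tfree

lemma core_props {h : ℕ} (hh : 1 ≤ h) {tfix tfree : Set Word}
    (h1 : MemB ((h + 1) / 2 - 1) tfix)
    (h2 : ∃ k, h / 2 ≤ k ∧ k ≤ h - 1 ∧ MemB k tfree) :
    IsFullBinaryTree (coreOf h tfix tfree) ∧ RHS (coreOf h tfix tfree) = h ∧
    (∀ w ∈ coreOf h tfix tfree, Sv w (coreOf h tfix tfree) = h → w = []) ∧
    subtreeAt [decide (h % 2 = 1)] (coreOf h tfix tfree) = tfree ∧
    subtreeAt [decide (h % 2 = 0)] (coreOf h tfix tfree) = tfix := by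
  obtain ⟨hfixfbt, hfixR⟩ := h1
  obtain ⟨k, hk1, hk2, hkfbt, hkR⟩ := h2
  have hfixfin := hfixfbt.1.1
  have hfixnil := hfixfbt.1.2.1
  have hkfin := hkfbt.1.1
  have hknil := hkfbt.1.2.1
  have hfixlt : RHS tfix < h := by rw [hfixR]; omega
  have hklt : RHS tfree < h := by rw [hkR]; omega
  rcases Nat.mod_two_eq_zero_or_one h with hp | hp
  · have hc : coreOf h tfix tfree = nodeSet tfree tfix := by rw [coreOf, if_pos hp]
    have hfbt : IsFullBinaryTree (coreOf h tfix tfree) := by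
      rw [hc]; exact nodeSet_fbt hkfbt hfixfbt
    have hR : RHS (coreOf h tfix tfree) = h := by
      rw [hc, RHS_node (nodeSet_finite hkfin hfixfin) (nil_mem_nodeSet _ _)
        (false_mem_nodeSet.mpr hknil) (true_mem_nodeSet.mpr hfixnil),
        subtreeAt_false_nodeSet, subtreeAt_true_nodeSet, hkR, hfixR]
      exact R_core_even hp hh hk1 hk2
    refine ⟨hfbt, hR, ?_, ?_, ?_⟩
    · intro w hw hS
      cases w with
      | nil => rfl
      | cons c w' =>
        exfalso
        rw [hc] at hw
        cases c with
        | false =>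
          rw [false_mem_nodeSet] at hw
          have hSw : Sv (false :: w') (coreOf h tfix tfree) = Sv w' tfree := by
            unfold Sv; rw [hc, subtreeAt_cons_false]
          have := Sv_le_RHS hkfin w'
          omega
        | true =>
          rw [true_mem_nodeSet] at hw
          have hSw : Sv (true :: w') (coreOf h tfix tfree) = Sv w' tfix := by
            unfold Sv; rw [hc, subtreeAt_cons_true]
          have := Sv_le_RHS hfixfin w'
          omega
    · have : decide (h % 2 = 1) = false := by simp [hp]
      rw [this, hc, subtreeAt_false_nodeSet]
    · have : decide (h % 2 = 0) = true := by simp [hp]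
      rw [this, hc, subtreeAt_true_nodeSet]
  · have hc : coreOf h tfix tfree = nodeSet tfix tfree := by
      rw [coreOf, if_neg (by omega)]
    have hfbt : IsFullBinaryTree (coreOf h tfix tfree) := by
      rw [hc]; exact nodeSet_fbt hfixfbt hkfbt
    have hR : RHS (coreOf h tfix tfree) = h := by
      rw [hc, RHS_node (nodeSet_finite hfixfin hkfin) (nil_mem_nodeSet _ _)
        (false_mem_nodeSet.mpr hfixnil) (true_mem_nodeSet.mpr hknil),
        subtreeAt_false_nodeSet, subtreeAt_true_nodeSet, hkR, hfixR]
      exact R_core_odd hp hk1 hk2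
    refine ⟨hfbt, hR, ?_, ?_, ?_⟩
    · intro w hw hS
      cases w with
      | nil => rfl
      | cons c w' =>
        exfalso
        rw [hc] at hw
        cases c with
        | false =>
          rw [false_mem_nodeSet] at hw
          have hSw : Sv (false :: w') (coreOf h tfix tfree) = Sv w' tfix := by
            unfold Sv; rw [hc, subtreeAt_cons_false]
          have := Sv_le_RHS hfixfin w'
          omega
        | true =>
          rw [true_mem_nodeSet] at hw
          have hSw : Sv (true :: w') (coreOf h tfix tfree) = Sv w' tfree := by
            unfold Sv; rw [hc, subtreeAt_cons_true]
          have := Sv_le_RHS hkfin w'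
          omega
    · have : decide (h % 2 = 1) = true := by simp [hp]
      rw [this, hc, subtreeAt_true_nodeSet]
    · have : decide (h % 2 = 0) = false := by simp [hp]
      rw [this, hc, subtreeAt_false_nodeSet]

lemma memB'_exists {h : ℕ} (hh : 1 ≤ h) {tfix tfree : Set Word}
    {spn : List (Bool × Set Word)} (hB : MemB' h tfix tfree spn) :
    MemB h (buildSpn spn (coreOf h tfix tfree)) ∧
    TreeDecomp h (buildSpn spn (coreOf h tfix tfree)) tfix tfree spn := by
  obtain ⟨h1, h2, h3⟩ := hB
  obtain ⟨cfbt, cR, cmax, csub1, csub0⟩ := core_props hh h1 h2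
  have hbound : ∀ p ∈ spn, IsFullBinaryTree p.2 ∧
      (if p.1 then 2 * RHS p.2 + 2 ≤ h else 2 * RHS p.2 + 1 ≤ h) := by
    intro p hp
    obtain ⟨k, ⟨hfbt', hR'⟩, hcond⟩ := h3 p hp
    refine ⟨hfbt', ?_⟩
    rw [hR']
    cases hq : p.1 with
    | true =>
      rw [hq] at hcond
      simp only [if_true] at hcond ⊢
      omega
    | false =>
      rw [hq] at hcond
      simp only [Bool.false_eq_true, if_false] at hcond ⊢
      omega
  obtain ⟨bfbt, bR, bsub, bmax, bspn⟩ := buildSpn_props hh cfbt cR cmax spn hbound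
  have hulen : (spn.map (fun p => !p.1)).length = spn.length := by simp
  have humem : spn.map (fun p => !p.1) ∈ buildSpn spn (coreOf h tfix tfree) := by
    have h0 : ([] : Word) ∈ subtreeAt (spn.map (fun p => !p.1))
        (buildSpn spn (coreOf h tfix tfree)) := by rw [bsub]; exact cfbt.1.2.1
    simpa [subtreeAt] using h0
  have huS : Sv (spn.map (fun p => !p.1)) (buildSpn spn (coreOf h tfix tfree)) = h := by
    unfold Sv; rw [bsub, cR]
  refine ⟨⟨bfbt, bR⟩, ⟨spn.map (fun p => !p.1), humem, huS, ?_, ?_, ?_, ?_⟩⟩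
  · intro w hw hS
    have := bmax w hw hS
    rcases eq_or_ne w (spn.map (fun p => !p.1)) with heq | hne
    · exact Or.inl heq
    · exact Or.inr (wlex_of_prefix this hne)
  · rw [subtreeAt_append, bsub, csub1]
  · rw [subtreeAt_append, bsub, csub0]
  · refine List.ext_get (by simp) ?_
    intro n hn1 hn2
    have hsnd := bspn n hn1
    simp only [List.get_eq_getElem, List.getElem_map, List.getElem_finRange,
      Fin.coe_cast, Fin.cast_mk, Bool.not_not] at hsnd ⊢
    rw [hsnd]
/-- For every `h ≥ 1`, the map `G : t ↦ (t^fix, t^free, ((v_j, t_j^spn))_{j≤ℓ})` is a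
bijection from `B_h` to `B'_h`: it is well defined on `B_h`, takes values in `B'_h`,
and every element of `B'_h` has a unique preimage in `B_h`. -/
theorem tree_decomposition_bijection (h : ℕ) (hh : 1 ≤ h) :
    (∀ t, MemB h t → ∃! x : Set Word × Set Word × List (Bool × Set Word),
      TreeDecomp h t x.1 x.2.1 x.2.2) ∧
    (∀ t tfix tfree spn, MemB h t → TreeDecomp h t tfix tfree spn →
      MemB' h tfix tfree spn) ∧
    (∀ tfix tfree spn, MemB' h tfix tfree spn →
      ∃! t, MemB h t ∧ TreeDecomp h t tfix tfree spn) := by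
  refine ⟨?_, ?_, ?_⟩
  · intro t ht
    exact decomp_exists_unique t ht
  · intro t tfix tfree spn ht hd
    exact decomp_memB' hh ht hd
  · intro tfix tfree spn hB
    obtain ⟨hmem, hdec⟩ := memB'_exists hh hB
    refine ⟨buildSpn spn (coreOf h tfix tfree), ⟨hmem, hdec⟩, ?_⟩
    rintro t' ⟨hmem', hdec'⟩
    exact decomp_ext hmem'.1.1 hmem.1.1 hdec' hdec
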